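/- Let Ω ⊂ ℝ^d be a compact convex set, T : ℝ^d → ℝ^d a nonsingular affine transform with linear part having transpose T*. Then for all x, y ∈ Ω, ρ_{TΩ}(Tx, Ty) ≤ ‖T*‖^{1/2} · ρ_Ω(x, y), where ‖T*‖ is the operator norm and ρ_K is the Dubiner-type metric of the convex set K. -/

import Mathlib

open scoped InnerProductSpace
open Pointwise

/-- `a_ξ = min_{z ∈ Ω} z·ξ`. -/
noncomputable def dubA {d : ℕ} (Ω : Set (EuclideanSpace ℝ (Fin d)))
    (ξ : EuclideanSpace ℝ (Fin d)) : ℝ :=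
  sInf ((fun z => ⟪z, ξ⟫_ℝ) '' Ω)

/-- The Dubiner-type metric
`ρ_Ω(x,y) = max_{ξ ∈ S^{d-1}} |√(x·ξ - a_ξ) - √(y·ξ - a_ξ)|`. -/
noncomputable def dubMetric {d : ℕ} (Ω : Set (EuclideanSpace ℝ (Fin d)))
    (x y : EuclideanSpace ℝ (Fin d)) : ℝ :=
  ⨆ ξ : Metric.sphere (0 : EuclideanSpace ℝ (Fin d)) 1,
    |Real.sqrt (⟪x, (ξ : EuclideanSpace ℝ (Fin d))⟫_ℝ - dubA Ω ξ) -
      Real.sqrt (⟪y, (ξ : EuclideanSpace ℝ (Fin d))⟫_ℝ - dubA Ω ξ)|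

lemma sqrt_add_le' (a b : ℝ) (ha : 0 ≤ a) (hb : 0 ≤ b) :
    Real.sqrt (a + b) ≤ Real.sqrt a + Real.sqrt b := by
  have h : a + b ≤ (Real.sqrt a + Real.sqrt b) ^ 2 := by
    have := Real.sq_sqrt ha
    have := Real.sq_sqrt hb
    have := mul_nonneg (Real.sqrt_nonneg a) (Real.sqrt_nonneg b)
    nlinarith
  calc Real.sqrt (a + b) ≤ Real.sqrt ((Real.sqrt a + Real.sqrt b) ^ 2) :=
        Real.sqrt_le_sqrt h
    _ = Real.sqrt a + Real.sqrt b := by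
        rw [Real.sqrt_sq (by positivity)]

lemma abs_sqrt_sub_sqrt_le (a b : ℝ) :
    |Real.sqrt a - Real.sqrt b| ≤ Real.sqrt |a - b| := by
  wlog h : b ≤ a with H
  · rw [abs_sub_comm, abs_sub_comm a b]
    exact H b a (le_of_not_ge h)
  rw [abs_of_nonneg (sub_nonneg.2 (Real.sqrt_le_sqrt h)), abs_of_nonneg (sub_nonneg.2 h)]
  by_cases hb : 0 ≤ b
  · have : Real.sqrt a ≤ Real.sqrt b + Real.sqrt (a - b) := by
      calc Real.sqrt a = Real.sqrt (b + (a - b)) := by ring_nf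
        _ ≤ Real.sqrt b + Real.sqrt (a - b) := sqrt_add_le' _ _ hb (by linarith)
    linarith
  · push_neg at hb
    rw [Real.sqrt_eq_zero_of_nonpos hb.le, sub_zero]
    exact Real.sqrt_le_sqrt (by linarith)

lemma dubA_smul {d : ℕ} (Ω : Set (EuclideanSpace ℝ (Fin d)))
    (t : ℝ) (ht : 0 ≤ t) (u : EuclideanSpace ℝ (Fin d)) :
    dubA Ω (t • u) = t * dubA Ω u := by
  unfold dubA
  have h1 : (fun z : EuclideanSpace ℝ (Fin d) => ⟪z, t • u⟫_ℝ) '' Ω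
      = t • ((fun z : EuclideanSpace ℝ (Fin d) => ⟪z, u⟫_ℝ) '' Ω) := by
    rw [← Set.image_smul, ← Set.image_comp]
    apply Set.image_congr
    intro z _
    simp only [smul_eq_mul]
    exact real_inner_smul_right z u t
  rw [h1, Real.sInf_smul_of_nonneg ht, smul_eq_mul]

theorem dubMetric_affine {d : ℕ} (hd : 1 ≤ d) (Ω : Set (EuclideanSpace ℝ (Fin d)))
    (hΩc : IsCompact Ω) (hΩconv : Convex ℝ Ω)
    (T : EuclideanSpace ℝ (Fin d) →ᵃ[ℝ] EuclideanSpace ℝ (Fin d))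
    (hT : Function.Bijective T.linear) :
    ∀ x ∈ Ω, ∀ y ∈ Ω,
      dubMetric (T '' Ω) (T x) (T y) ≤
        Real.sqrt ‖ContinuousLinearMap.adjoint (LinearMap.toContinuousLinearMap T.linear)‖ *
          dubMetric Ω x y := by
  intro x hx y hy
  set A := ContinuousLinearMap.adjoint (LinearMap.toContinuousLinearMap T.linear) with hA
  have hΩne : Ω.Nonempty := ⟨x, hx⟩
  haveI : Nontrivial (EuclideanSpace ℝ (Fin d)) := by
    refine nontrivial_of_ne (EuclideanSpace.single ⟨0, hd⟩ (1:ℝ)) 0 ?_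
    intro h
    replace h := congrArg (fun v : EuclideanSpace ℝ (Fin d) => v ⟨0, hd⟩) h
    simp [EuclideanSpace.single_apply] at h
  haveI : Nonempty (Metric.sphere (0 : EuclideanSpace ℝ (Fin d)) 1) :=
    (NormedSpace.sphere_nonempty.mpr zero_le_one).to_subtype
  have key : ∀ (ξ z : EuclideanSpace ℝ (Fin d)),
      ⟪T z, ξ⟫_ℝ = ⟪z, A ξ⟫_ℝ + ⟪T 0, ξ⟫_ℝ := by
    intro ξ z
    have hTz : T z = T.linear z + T 0 := by
      have := T.map_vadd (0 : EuclideanSpace ℝ (Fin d)) z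
      simpa [vadd_eq_add] using this
    rw [hTz, inner_add_left]
    congr 1
    exact (ContinuousLinearMap.adjoint_inner_right (LinearMap.toContinuousLinearMap T.linear) z ξ).symm
  have hM : 0 ≤ dubMetric Ω x y := Real.iSup_nonneg fun ξ => abs_nonneg _
  have hbdd : BddAbove (Set.range fun ξ : Metric.sphere (0 : EuclideanSpace ℝ (Fin d)) 1 =>
      |Real.sqrt (⟪x, (ξ : EuclideanSpace ℝ (Fin d))⟫_ℝ - dubA Ω ξ) -
        Real.sqrt (⟪y, (ξ : EuclideanSpace ℝ (Fin d))⟫_ℝ - dubA Ω ξ)|) := by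
    refine ⟨Real.sqrt ‖x - y‖, ?_⟩
    rintro r ⟨ξ, rfl⟩
    calc |Real.sqrt (⟪x, (ξ : EuclideanSpace ℝ (Fin d))⟫_ℝ - dubA Ω ξ) -
          Real.sqrt (⟪y, (ξ : EuclideanSpace ℝ (Fin d))⟫_ℝ - dubA Ω ξ)|
        ≤ Real.sqrt |(⟪x, (ξ : EuclideanSpace ℝ (Fin d))⟫_ℝ - dubA Ω ξ) -
            (⟪y, (ξ : EuclideanSpace ℝ (Fin d))⟫_ℝ - dubA Ω ξ)| :=
          abs_sqrt_sub_sqrt_le _ _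
      _ = Real.sqrt |⟪x - y, (ξ : EuclideanSpace ℝ (Fin d))⟫_ℝ| := by
          rw [inner_sub_left]; ring_nf
      _ ≤ Real.sqrt ‖x - y‖ := by
          apply Real.sqrt_le_sqrt
          calc |⟪x - y, (ξ : EuclideanSpace ℝ (Fin d))⟫_ℝ|
              ≤ ‖x - y‖ * ‖(ξ : EuclideanSpace ℝ (Fin d))‖ := abs_real_inner_le_norm _ _
            _ = ‖x - y‖ := by
                have h1 : ‖(ξ : EuclideanSpace ℝ (Fin d))‖ = 1 := by
                  simpa using mem_sphere_zero_iff_norm.mp ξ.2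
                rw [h1, mul_one]
  apply ciSup_le
  rintro ⟨ξ, hξ⟩
  have hξ1 : ‖ξ‖ = 1 := by simpa using mem_sphere_zero_iff_norm.mp hξ
  have himg : dubA (T '' Ω) ξ = dubA Ω (A ξ) + ⟪T 0, ξ⟫_ℝ := by
    unfold dubA
    rw [← Set.image_comp]
    have hcomp : ((fun z : EuclideanSpace ℝ (Fin d) => ⟪z, ξ⟫_ℝ) ∘ T)
        = (fun r : ℝ => r + ⟪T 0, ξ⟫_ℝ) ∘ (fun z : EuclideanSpace ℝ (Fin d) => ⟪z, A ξ⟫_ℝ) :=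
      funext fun z => key ξ z
    rw [hcomp, Set.image_comp]
    have hcont : Continuous fun z : EuclideanSpace ℝ (Fin d) => ⟪z, A ξ⟫_ℝ :=
      Continuous.inner continuous_id continuous_const
    have hsne : ((fun z : EuclideanSpace ℝ (Fin d) => ⟪z, A ξ⟫_ℝ) '' Ω).Nonempty := hΩne.image _
    have hsbd : BddBelow ((fun z : EuclideanSpace ℝ (Fin d) => ⟪z, A ξ⟫_ℝ) '' Ω) :=
      (hΩc.image hcont).bddBelow
    exact (Monotone.map_csInf_of_continuousAt
      ((continuous_add_right _).continuousAt)
      (fun a b h => by linarith) hsne hsbd).symm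
  have hterm : ∀ z : EuclideanSpace ℝ (Fin d),
      ⟪T z, ξ⟫_ℝ - dubA (T '' Ω) ξ = ⟪z, A ξ⟫_ℝ - dubA Ω (A ξ) := by
    intro z
    rw [key ξ z, himg]; ring
  show |Real.sqrt (⟪T x, ξ⟫_ℝ - dubA (T '' Ω) ξ) -
      Real.sqrt (⟪T y, ξ⟫_ℝ - dubA (T '' Ω) ξ)| ≤ Real.sqrt ‖A‖ * dubMetric Ω x y
  rw [hterm x, hterm y]
  by_cases hη : A ξ = 0
  · rw [hη]
    simp only [inner_zero_right, zero_sub]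
    simpa using mul_nonneg (Real.sqrt_nonneg ‖A‖) hM
  · set t := ‖A ξ‖ with htdef
    have ht : 0 < t := norm_pos_iff.mpr hη
    set u := t⁻¹ • (A ξ) with hu
    have huη : A ξ = t • u := by
      rw [hu, smul_smul, mul_inv_cancel₀ ht.ne', one_smul]
    have hun : ‖u‖ = 1 := by
      rw [hu, norm_smul, norm_inv, norm_norm, inv_mul_cancel₀ ht.ne']
    have hmem : u ∈ Metric.sphere (0 : EuclideanSpace ℝ (Fin d)) 1 := by
      simpa [mem_sphere_zero_iff_norm] using hun
    have hsplit : ∀ z : EuclideanSpace ℝ (Fin d),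
        ⟪z, A ξ⟫_ℝ - dubA Ω (A ξ) = t * (⟪z, u⟫_ℝ - dubA Ω u) := by
      intro z
      rw [huη, real_inner_smul_right, dubA_smul Ω t ht.le u]; ring
    rw [hsplit x, hsplit y, Real.sqrt_mul ht.le, Real.sqrt_mul ht.le,
      ← mul_sub, abs_mul, abs_of_nonneg (Real.sqrt_nonneg t)]
    have h1 : |Real.sqrt (⟪x, u⟫_ℝ - dubA Ω u) - Real.sqrt (⟪y, u⟫_ℝ - dubA Ω u)|
        ≤ dubMetric Ω x y :=
      le_ciSup hbdd (⟨u, hmem⟩ : Metric.sphere (0 : EuclideanSpace ℝ (Fin d)) 1)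
    have h2 : Real.sqrt t ≤ Real.sqrt ‖A‖ := by
      apply Real.sqrt_le_sqrt
      calc t = ‖A ξ‖ := rfl
        _ ≤ ‖A‖ * ‖ξ‖ := A.le_opNorm ξ
        _ = ‖A‖ := by rw [hξ1, mul_one]
    calc Real.sqrt t * |Real.sqrt (⟪x, u⟫_ℝ - dubA Ω u) - Real.sqrt (⟪y, u⟫_ℝ - dubA Ω u)|
        ≤ Real.sqrt t * dubMetric Ω x y :=
          mul_le_mul_of_nonneg_left h1 (Real.sqrt_nonneg t)
      _ ≤ Real.sqrt ‖A‖ * dubMetric Ω x y := mul_le_mul_of_nonneg_right h2 hM
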